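/- Let q ≥ 2, 1 ≤ t ≤ m, F ≥ 1 and 0 ≤ Z ≤ F be integers, and let M be an F×m array with entries in {0,...,q-1}. The following are equivalent: (i) for every t-element subset T = {δ_0 < ... < δ_{t-1}} of {0,...,m-1} and every b ∈ {0,...,q-1}^t, the number of rows f of M with f_{δ_h} ≠ b_h for all h ∈ {0,...,t-1} equals F − Z (equivalently, every column of the array of Construction 1 with row index matrix M and full column index set contains exactly Z stars); (ii) (q−1)^t divides F − Z and M is an orthogonal array OA_λ(F,m,q,t) with index λ = (F−Z)/(q−1)^t. -/

import Mathlib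

open Finset Function

section OAAux

variable {q m F : ℕ}

private def Navoid (M : Fin F → Fin m → Fin q) (A : Finset (Fin m)) (b : Fin m → Fin q) : ℕ :=
  (univ.filter fun r => ∀ i ∈ A, M r i ≠ b i).card

private def Nmatch (M : Fin F → Fin m → Fin q) (B : Finset (Fin m)) (b : Fin m → Fin q) : ℕ :=
  (univ.filter fun r => ∀ i ∈ B, M r i = b i).card

private def Nmix (M : Fin F → Fin m → Fin q) (A B : Finset (Fin m)) (b : Fin m → Fin q) : ℕ :=
  (univ.filter fun r => (∀ i ∈ A, M r i ≠ b i) ∧ (∀ i ∈ B, M r i = b i)).card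

private lemma Nmix_empty_left (M : Fin F → Fin m → Fin q) (B : Finset (Fin m))
    (b : Fin m → Fin q) : Nmix M ∅ B b = Nmatch M B b := by
  simp [Nmix, Nmatch]

private lemma Nmix_empty_right (M : Fin F → Fin m → Fin q) (A : Finset (Fin m))
    (b : Fin m → Fin q) : Nmix M A ∅ b = Navoid M A b := by
  simp [Nmix, Navoid]

private lemma ncard_eq_filter (P : Fin F → Prop) [DecidablePred P] :
    {r : Fin F | P r}.ncard = (univ.filter P).card := by
  rw [Set.ncard_eq_toFinset_card']
  congr 1
  ext r
  simp

private lemma sum_inner_ne (x : Fin q) : (∑ a : Fin q, if x ≠ a then (1:ℕ) else 0) = q - 1 := by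
  have h : ∀ a : Fin q, ((if x ≠ a then (1:ℕ) else 0) + if x = a then 1 else 0) = 1 := by
    intro a; by_cases h3 : x = a <;> simp [h3]
  have h2 : (∑ a : Fin q, ((if x ≠ a then (1:ℕ) else 0) + if x = a then 1 else 0)) = q := by
    rw [Finset.sum_congr rfl fun a _ => h a]; simp
  rw [Finset.sum_add_distrib] at h2
  have h3 : (∑ a : Fin q, if x = a then (1:ℕ) else 0) = 1 := by simp
  omega

private lemma sum_filter_ne (P : Fin F → Prop) [DecidablePred P] (g : Fin F → Fin q) :
    ∑ a : Fin q, (univ.filter fun r => P r ∧ g r ≠ a).card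
      = (q - 1) * (univ.filter P).card := by
  simp only [Finset.card_filter]
  rw [Finset.sum_comm, Finset.mul_sum]
  refine Finset.sum_congr rfl fun r _ => ?_
  by_cases h : P r
  · simp only [h, true_and, if_true, mul_one]
    exact sum_inner_ne (g r)
  · simp [h]

private lemma sum_filter_eq (P : Fin F → Prop) [DecidablePred P] (g : Fin F → Fin q) :
    ∑ a : Fin q, (univ.filter fun r => P r ∧ g r = a).card
      = (univ.filter P).card := by
  simp only [Finset.card_filter]
  rw [Finset.sum_comm]
  refine Finset.sum_congr rfl fun r _ => ?_
  by_cases h : P r <;> simp [h]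

/-- K1 : summing avoid-counts over all values at a fresh coordinate. -/
private lemma k1 (M : Fin F → Fin m → Fin q) (A : Finset (Fin m)) (b : Fin m → Fin q)
    (j : Fin m) (hj : j ∉ A) :
    ∑ a : Fin q, Navoid M (insert j A) (Function.update b j a)
      = (q - 1) * Navoid M A b := by
  have h : ∀ a : Fin q, Navoid M (insert j A) (Function.update b j a)
      = (univ.filter fun r => (∀ i ∈ A, M r i ≠ b i) ∧ M r j ≠ a).card := by
    intro a
    unfold Navoid
    congr 1
    apply Finset.filter_congr
    intro r _
    rw [Finset.forall_mem_insert, update_self, and_comm]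
    apply and_congr_left'
    exact forall₂_congr fun i hi => by
      rw [update_of_ne (by rintro rfl; exact hj hi)]
  rw [Finset.sum_congr rfl fun a _ => h a]
  exact sum_filter_ne _ _

/-- K3 : summing match-counts over all values at a fresh coordinate. -/
private lemma k3 (M : Fin F → Fin m → Fin q) (B : Finset (Fin m)) (b : Fin m → Fin q)
    (j : Fin m) (hj : j ∉ B) :
    ∑ a : Fin q, Nmatch M (insert j B) (Function.update b j a) = Nmatch M B b := by
  have h : ∀ a : Fin q, Nmatch M (insert j B) (Function.update b j a)
      = (univ.filter fun r => (∀ i ∈ B, M r i = b i) ∧ M r j = a).card := by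
    intro a
    unfold Nmatch
    congr 1
    apply Finset.filter_congr
    intro r _
    rw [Finset.forall_mem_insert, update_self, and_comm]
    apply and_congr_left'
    exact forall₂_congr fun i hi => by
      rw [update_of_ne (by rintro rfl; exact hj hi)]
  rw [Finset.sum_congr rfl fun a _ => h a]
  exact sum_filter_eq _ _

/-- K2 : partition of a mixed count on a new coordinate. -/
private lemma k2 (M : Fin F → Fin m → Fin q) (A B : Finset (Fin m)) (b : Fin m → Fin q)
    (j : Fin m) :
    Nmix M A B b = Nmix M (insert j A) B b + Nmix M A (insert j B) b := by
  have h := Finset.card_filter_add_card_filter_not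
    (s := univ.filter fun r : Fin F => (∀ i ∈ A, M r i ≠ b i) ∧ (∀ i ∈ B, M r i = b i))
    (p := fun r => M r j = b j)
  rw [Finset.filter_filter, Finset.filter_filter] at h
  have e1 : (univ.filter fun r : Fin F =>
        ((∀ i ∈ A, M r i ≠ b i) ∧ (∀ i ∈ B, M r i = b i)) ∧ M r j = b j)
      = univ.filter fun r => (∀ i ∈ A, M r i ≠ b i) ∧ (∀ i ∈ insert j B, M r i = b i) := by
    apply Finset.filter_congr
    intro r _
    rw [Finset.forall_mem_insert]
    tauto
  have e2 : (univ.filter fun r : Fin F =>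
        ((∀ i ∈ A, M r i ≠ b i) ∧ (∀ i ∈ B, M r i = b i)) ∧ ¬ M r j = b j)
      = univ.filter fun r => (∀ i ∈ insert j A, M r i ≠ b i) ∧ (∀ i ∈ B, M r i = b i) := by
    apply Finset.filter_congr
    intro r _
    rw [Finset.forall_mem_insert]
    tauto
  rw [e1, e2] at h
  unfold Nmix
  omega

private lemma exists_not_mem {A : Finset (Fin m)} (h : A.card < m) : ∃ j, j ∉ A := by
  by_contra hc
  push_neg at hc
  have : A = univ := Finset.eq_univ_iff_forall.2 hc
  rw [this, Finset.card_univ, Fintype.card_fin] at h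
  omega

/-- Lemma A: multiplied form of the avoid counts, downward from size `t`. -/
private lemma lemA {t W : ℕ} (M : Fin F → Fin m → Fin q) (htm : t ≤ m)
    (H : ∀ T : Finset (Fin m), T.card = t → ∀ b : Fin m → Fin q, Navoid M T b = W) :
    ∀ k (A : Finset (Fin m)) (b : Fin m → Fin q), A.card + k = t →
      (q - 1) ^ k * Navoid M A b = W * q ^ k := by
  intro k
  induction k with
  | zero =>
    intro A b h
    simpa using H A (by omega) b
  | succ k ih =>
    intro A b h
    obtain ⟨j, hj⟩ := exists_not_mem (A := A) (by omega)
    have hcard : (insert j A).card = A.card + 1 := Finset.card_insert_of_notMem hj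
    calc (q - 1) ^ (k + 1) * Navoid M A b
        = (q - 1) ^ k * ((q - 1) * Navoid M A b) := by ring
      _ = (q - 1) ^ k * ∑ a : Fin q, Navoid M (insert j A) (Function.update b j a) := by
          rw [k1 M A b j hj]
      _ = ∑ a : Fin q, (q - 1) ^ k * Navoid M (insert j A) (Function.update b j a) := by
          rw [Finset.mul_sum]
      _ = ∑ _a : Fin q, W * q ^ k := by
          refine Finset.sum_congr rfl fun a _ => ?_
          exact ih (insert j A) (Function.update b j a) (by omega)
      _ = q * (W * q ^ k) := by simp [Finset.sum_const, mul_comm]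
      _ = W * q ^ (k + 1) := by ring





/-- Lemma B: clean form of the avoid counts, given `W = lam * (q-1)^t`. -/
private lemma lemB {t W lam : ℕ} (M : Fin F → Fin m → Fin q) (hq : 2 ≤ q) (htm : t ≤ m)
    (hW : W = lam * (q - 1) ^ t)
    (H : ∀ T : Finset (Fin m), T.card = t → ∀ b : Fin m → Fin q, Navoid M T b = W)
    (A : Finset (Fin m)) (b : Fin m → Fin q) (hA : A.card ≤ t) :
    Navoid M A b = lam * q ^ (t - A.card) * (q - 1) ^ A.card := by
  have h := lemA M htm H (t - A.card) A b (by omega)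
  have hsplit : (q - 1) ^ t = (q - 1) ^ (t - A.card) * (q - 1) ^ A.card := by
    rw [← pow_add]; congr 1; omega
  rw [hW, hsplit] at h
  have hpos : 0 < (q - 1) ^ (t - A.card) := Nat.pow_pos (by omega)
  apply Nat.eq_of_mul_eq_mul_left hpos
  rw [h]; ring

/-- Lemma C: mixed counts, forward direction. -/
private lemma lemC {t W lam : ℕ} (M : Fin F → Fin m → Fin q) (hq : 2 ≤ q) (htm : t ≤ m)
    (hW : W = lam * (q - 1) ^ t)
    (H : ∀ T : Finset (Fin m), T.card = t → ∀ b : Fin m → Fin q, Navoid M T b = W) :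
    ∀ (B A : Finset (Fin m)) (b : Fin m → Fin q), Disjoint A B → A.card + B.card ≤ t →
      Nmix M A B b = lam * q ^ (t - A.card - B.card) * (q - 1) ^ A.card := by
  intro B
  induction B using Finset.induction_on with
  | empty =>
    intro A b _ hc
    rw [Nmix_empty_right]
    simpa using lemB M hq htm hW H A b (by simpa using hc)
  | @insert j B₀ hjB ih =>
    intro A b hd hc
    have hjA : j ∉ A := (Finset.disjoint_insert_right.mp hd).1
    have hdAB : Disjoint A B₀ := (Finset.disjoint_insert_right.mp hd).2
    have hcB : (insert j B₀).card = B₀.card + 1 := Finset.card_insert_of_notMem hjB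
    have hcA : (insert j A).card = A.card + 1 := Finset.card_insert_of_notMem hjA
    have h1 := ih A b hdAB (by omega)
    have h2 := ih (insert j A) b
      (Finset.disjoint_insert_left.mpr ⟨hjB, hdAB⟩) (by omega)
    have h3 := k2 M A B₀ b j
    rw [hcA] at h2
    obtain ⟨p, rfl⟩ : ∃ p, q = p + 1 := ⟨q - 1, by omega⟩
    set e := t - A.card - B₀.card - 1 with he
    have he1 : t - A.card - B₀.card = e + 1 := by omega
    have he2 : t - (A.card + 1) - B₀.card = e := by omega
    have he3 : t - A.card - (insert j B₀).card = e := by rw [hcB]; omega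
    rw [he1] at h1
    rw [he2] at h2
    rw [he3]
    have hps : p + 1 - 1 = p := by omega
    rw [hps] at h1 h2 ⊢
    have key : lam * (p + 1) ^ (e + 1) * p ^ A.card
        = lam * (p + 1) ^ e * p ^ (A.card + 1) + lam * (p + 1) ^ e * p ^ A.card := by
      ring
    omega

/-- Lemma B': match counts, downward from size `t`, given the OA property. -/
private lemma lemB' {t lam : ℕ} (M : Fin F → Fin m → Fin q) (htm : t ≤ m)
    (H : ∀ S : Finset (Fin m), S.card = t → ∀ v : Fin m → Fin q, Nmatch M S v = lam) :
    ∀ k (B : Finset (Fin m)) (b : Fin m → Fin q), B.card + k = t →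
      Nmatch M B b = lam * q ^ k := by
  intro k
  induction k with
  | zero =>
    intro B b h
    simpa using H B (by omega) b
  | succ k ih =>
    intro B b h
    obtain ⟨j, hj⟩ := exists_not_mem (A := B) (by omega)
    have hcard : (insert j B).card = B.card + 1 := Finset.card_insert_of_notMem hj
    calc Nmatch M B b
        = ∑ a : Fin q, Nmatch M (insert j B) (Function.update b j a) := (k3 M B b j hj).symm
      _ = ∑ _a : Fin q, lam * q ^ k := by
          refine Finset.sum_congr rfl fun a _ => ?_
          exact ih (insert j B) (Function.update b j a) (by omega)
      _ = q * (lam * q ^ k) := by simp [Finset.sum_const, mul_comm]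
      _ = lam * q ^ (k + 1) := by ring

/-- Lemma C': mixed counts, reverse direction. -/
private lemma lemC' {t lam : ℕ} (M : Fin F → Fin m → Fin q) (hq : 2 ≤ q) (htm : t ≤ m)
    (H : ∀ S : Finset (Fin m), S.card = t → ∀ v : Fin m → Fin q, Nmatch M S v = lam) :
    ∀ (A B : Finset (Fin m)) (b : Fin m → Fin q), Disjoint A B → A.card + B.card ≤ t →
      Nmix M A B b = lam * q ^ (t - A.card - B.card) * (q - 1) ^ A.card := by
  intro A
  induction A using Finset.induction_on with
  | empty =>
    intro B b _ hc
    rw [Nmix_empty_left]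
    have := lemB' M htm H (t - B.card) B b (by simp at hc; omega)
    simpa using this
  | @insert j A₀ hjA ih =>
    intro B b hd hc
    have hjB : j ∉ B := (Finset.disjoint_insert_left.mp hd).1
    have hdAB : Disjoint A₀ B := (Finset.disjoint_insert_left.mp hd).2
    have hcA : (insert j A₀).card = A₀.card + 1 := Finset.card_insert_of_notMem hjA
    have h1 := ih B b hdAB (by omega)
    have h2 := ih (insert j B) b
      (Finset.disjoint_insert_right.mpr ⟨hjA, hdAB⟩) (by
        rw [Finset.card_insert_of_notMem hjB]; omega)
    have h3 := k2 M A₀ B b j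
    rw [Finset.card_insert_of_notMem hjB] at h2
    obtain ⟨p, rfl⟩ : ∃ p, q = p + 1 := ⟨q - 1, by omega⟩
    set e := t - A₀.card - B.card - 1 with he
    have he1 : t - A₀.card - B.card = e + 1 := by omega
    have he2 : t - A₀.card - (B.card + 1) = e := by omega
    have he3 : t - (insert j A₀).card - B.card = e := by rw [hcA]; omega
    rw [he1] at h1
    rw [he2] at h2
    rw [he3, hcA]
    have hps : p + 1 - 1 = p := by omega
    rw [hps] at h1 h2 ⊢
    have key : lam * (p + 1) ^ (e + 1) * p ^ A₀.card
        = lam * (p + 1) ^ e * p ^ A₀.card + lam * (p + 1) ^ e * p ^ A₀.card * p := by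
      ring
    have key2 : lam * (p + 1) ^ e * p ^ (A₀.card + 1)
        = lam * (p + 1) ^ e * p ^ A₀.card * p := by ring
    omega

end OAAux

/-- An `F × m` array `M` with entries in `{0,...,q-1}` is an orthogonal array
`OA_λ(F,m,q,s)` of strength `s` and index `lam` if for every `s`-element subset
`S` of the column indices, every assignment of values to the coordinates in `S`
occurs exactly `lam` times among the rows of `M` restricted to `S`. -/
def IsOA (F m q s lam : ℕ) (M : Fin F → Fin m → Fin q) : Prop :=
  ∀ S : Finset (Fin m), S.card = s → ∀ v : Fin m → Fin q,
    {r : Fin F | ∀ i ∈ S, M r i = v i}.ncard = lam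

/-- Theorem 3: let `q ≥ 2`, `1 ≤ t ≤ m`, `F ≥ 1`, `Z ≤ F`, and let `M` be an
`F × m` array over `{0,...,q-1}`.  Every column of the array of Construction 1
with row index matrix `M` and full column index set contains exactly `Z` stars
(i.e. for every `t`-element subset `T` of the coordinates and every assignment
`b` of values to the coordinates in `T`, exactly `F − Z` rows of `M` differ
from `b` on every coordinate of `T`) if and only if `(q−1)^t` divides `F − Z`
and `M` is an orthogonal array `OA_λ(F,m,q,t)` with `λ = (F−Z)/(q−1)^t`. -/
theorem column_stars_iff_OA (q m t F Z : ℕ)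
    (hq : 2 ≤ q) (ht : 1 ≤ t) (htm : t ≤ m) (hF : 1 ≤ F) (hZ : Z ≤ F)
    (M : Fin F → Fin m → Fin q) :
    (∀ T : Finset (Fin m), T.card = t → ∀ b : Fin m → Fin q,
        {r : Fin F | ∀ i ∈ T, M r i ≠ b i}.ncard = F - Z) ↔
      ((q - 1) ^ t ∣ F - Z ∧ IsOA F m q t ((F - Z) / (q - 1) ^ t) M) := by
  constructor
  · intro h
    have H : ∀ T : Finset (Fin m), T.card = t → ∀ b : Fin m → Fin q,
        Navoid M T b = F - Z := by
      intro T hT b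
      rw [Navoid, ← ncard_eq_filter]
      exact h T hT b
    obtain ⟨b0⟩ : Nonempty (Fin m → Fin q) := ⟨fun _ => ⟨0, by omega⟩⟩
    have hA := lemA M htm H t ∅ b0 (by simp)
    have hNe : Navoid M ∅ b0 = F := by
      simp [Navoid, Finset.card_univ]
    rw [hNe] at hA
    have hq1 : q - 1 + 1 = q := by omega
    have hcop : Nat.Coprime ((q - 1) ^ t) (q ^ t) := by
      apply Nat.Coprime.pow
      have hqe : q = (q - 1) + 1 := by omega
      rw [hqe]
      simp
    have hdvd : (q - 1) ^ t ∣ F - Z := hcop.dvd_of_dvd_mul_right ⟨F, hA.symm⟩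
    refine ⟨hdvd, ?_⟩
    intro S hS v
    have hW : F - Z = ((F - Z) / (q - 1) ^ t) * (q - 1) ^ t := (Nat.div_mul_cancel hdvd).symm
    have hc := lemC M hq htm hW H S ∅ v (by simp) (by simp [hS])
    rw [Nmix_empty_left] at hc
    simp only [Finset.card_empty, hS, Nat.sub_zero, Nat.sub_self, pow_zero, mul_one] at hc
    rw [ncard_eq_filter]
    simpa [Nmatch] using hc
  · rintro ⟨hdvd, hOA⟩ T hT b
    have H : ∀ S : Finset (Fin m), S.card = t → ∀ v : Fin m → Fin q,
        Nmatch M S v = (F - Z) / (q - 1) ^ t := by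
      intro S hS v
      rw [Nmatch, ← ncard_eq_filter]
      exact hOA S hS v
    have hc := lemC' M hq htm H T ∅ b (by simp) (by simp [hT])
    rw [Nmix_empty_right] at hc
    simp only [Finset.card_empty, hT, Nat.sub_zero, Nat.sub_self, pow_zero, one_mul, mul_one] at hc
    rw [ncard_eq_filter]
    show Navoid M T b = F - Z
    rw [hc]
    exact Nat.div_mul_cancel hdvd
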